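/- arXiv:1204.0829 — 9 statements merged into one kernel-verified Lean document; each statement's English description precedes it below -/
import Mathlib

section
/- Let G be a countable group acting by Borel automorphisms on a standard Borel space X. If X is compressible, i.e., X is equidecomposable with a Borel subset B ⊆ X such that X \ B meets every orbit, then there is no G-invariant Borel probability measure on X. -/
open MeasureTheory Pointwise

/-- If a standard Borel `G`-space `X` is compressible, i.e. `X` is
(Borel) equidecomposable with a Borel subset `B ⊆ X` such that `X \ B` meets every
orbit (its `G`-saturation is all of `X`), then there is no `G`-invariant Borel
probability measure on `X`. -/
theorem stmt_1 {G X : Type*} [Group G] [Countable G]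
    [MeasurableSpace X] [StandardBorelSpace X] [MulAction G X]
    (hact : ∀ g : G, Measurable fun x : X => g • x)
    (B : Set X) (hB : MeasurableSet B)
    (Xn Bn : ℕ → Set X) (g : ℕ → G)
    (hXnm : ∀ n, MeasurableSet (Xn n)) (hBnm : ∀ n, MeasurableSet (Bn n))
    (hXd : Pairwise (Function.onFun Disjoint Xn))
    (hBd : Pairwise (Function.onFun Disjoint Bn))
    (hXU : (⋃ n, Xn n) = Set.univ) (hBU : (⋃ n, Bn n) = B)
    (hg : ∀ n, g n • Xn n = Bn n)
    (hsat : (⋃ g : G, g • Bᶜ) = Set.univ) :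
    ¬ ∃ μ : Measure X, IsProbabilityMeasure μ ∧ ∀ (g : G) (S : Set X), μ (g • S) = μ S := by
  rintro ⟨μ, hμ, hinv⟩
  have hBmeas : μ B = 1 := by
    have h1 : μ Set.univ = 1 := measure_univ
    rw [← hXU, measure_iUnion hXd hXnm] at h1
    rw [← hBU, measure_iUnion hBd hBnm, ← h1]
    exact tsum_congr fun n => by rw [← hg n, hinv]
  have hBc : μ Bᶜ = 0 := by
    have := measure_compl hB (measure_ne_top μ B)
    rw [hBmeas, measure_univ] at this
    simpa using this
  have huniv : μ Set.univ = 0 := by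
    rw [← hsat]
    refine le_antisymm ?_ zero_le
    calc μ (⋃ g : G, g • Bᶜ) ≤ ∑' g : G, μ (g • Bᶜ) := measure_iUnion_le _
    _ = 0 := by simp [hinv, hBc]
  simp [measure_univ] at huniv
end

section
/- Let F = {n_0 < n_1 < ... < n_{k-1}} ⊆ ℤ be a d-syndetic set (i.e., n_{i+1} − n_i ≤ d for all i < k−1) of length ||F|| = n_{k-1} − n_0, with d ≥ 1. Let H ⊆ ℤ with |H| = d+1 and max(H) − min(H) < ||F|| + d. Then F is not weakly wandering with respect to H, i.e., there exist distinct h, h' ∈ H with (h + F) ∩ (h' + F) ≠ ∅. -/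
/-- Let `F ⊆ ℤ` be a finite nonempty `d`-syndetic set (any element below
another element of `F` has a successor in `F` within distance `d`), of length
`max F - min F`, and let `H ⊆ ℤ` be finite with `|H| = d + 1` and
`max H - min H < (max F - min F) + d`. Then `F` is not weakly wandering with respect to
`H`: there are distinct `h, h' ∈ H` with `(h + F) ∩ (h' + F) ≠ ∅`. -/
theorem stmt_5 (d : ℕ) (hd : 1 ≤ d) (F H : Finset ℤ)
    (hF : F.Nonempty)
    (hsyn : ∀ m ∈ F, ∀ m' ∈ F, m < m' → ∃ m'' ∈ F, m < m'' ∧ m'' ≤ m + (d : ℤ))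
    (hH : H.Nonempty) (hcard : H.card = d + 1)
    (hwidth : H.max' hH - H.min' hH < (F.max' hF - F.min' hF) + (d : ℤ)) :
    ∃ h ∈ H, ∃ h' ∈ H, h ≠ h' ∧ ∃ a ∈ F, ∃ b ∈ F, h + a = h' + b := by
  classical
  set h0 := H.min' hH with hh0
  set M := F.max' hF with hM
  have key : ∀ h ∈ H, ∃ a ∈ F, M - (h - h0) ≤ a ∧ a ≤ M - (h - h0) + d - 1 := by
    intro h hh
    set x := M - (h - h0) with hx
    have hxle : x ≤ M := by
      have : h0 ≤ h := H.min'_le h hh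
      omega
    have hxgt : F.min' hF - d < x := by
      have h1 : h ≤ H.max' hH := H.le_max' h hh
      omega
    by_cases hc : x ≤ F.min' hF
    · exact ⟨F.min' hF, F.min'_mem hF, hc, by omega⟩
    · push_neg at hc
      have hS : (F.filter (fun a => x ≤ a)).Nonempty :=
        ⟨F.max' hF, by simp [Finset.mem_filter, F.max'_mem hF]; exact hxle⟩
      have hT : (F.filter (fun a => a < x)).Nonempty :=
        ⟨F.min' hF, by simp [F.min'_mem hF, hc]⟩
      set p := (F.filter (fun a => a < x)).max' hT with hp
      have hpmem := (F.filter (fun a => a < x)).max'_mem hT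
      rw [Finset.mem_filter] at hpmem
      set a := (F.filter (fun a => x ≤ a)).min' hS with ha
      have hamem := (F.filter (fun a => x ≤ a)).min'_mem hS
      rw [Finset.mem_filter] at hamem
      obtain ⟨m'', hm''F, hpm'', hm''d⟩ := hsyn p hpmem.1 a hamem.1 (by omega)
      have hxm : x ≤ m'' := by
        by_contra hlt
        push_neg at hlt
        have : m'' ≤ p := Finset.le_max' _ m'' (by simp [Finset.mem_filter, hm''F, hlt])
        omega
      have ham : a ≤ m'' := Finset.min'_le _ m'' (by simp [Finset.mem_filter, hm''F, hxm])
      exact ⟨a, hamem.1, hamem.2, by omega⟩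
  choose! a haF hax had using key
  have maps : ∀ h ∈ H, h + a h ∈ Finset.Icc (h0 + M) (h0 + M + (d : ℤ) - 1) := by
    intro h hh
    have h1 := hax h hh
    have h2 := had h hh
    simp only [Finset.mem_Icc]
    omega
  have hlt : (Finset.Icc (h0 + M) (h0 + M + (d : ℤ) - 1)).card < H.card := by
    rw [Int.card_Icc, hcard]
    omega
  obtain ⟨h, hh, h', hh', hne, heq⟩ :=
    Finset.exists_ne_map_eq_of_card_lt_of_maps_to hlt maps
  exact ⟨h, hh, h', hh', hne, a h, haF h hh, a h', haF h' hh', heq⟩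
end

section
/- Let T : X → X be a bijection of a set X and let A ⊆ X. Suppose A is weakly wandering with respect to an infinite set H ⊆ ℤ (i.e., the sets T^h(A), h ∈ H, are pairwise disjoint). Then for every d ∈ ℕ, s_A(d) + d ≤ w_H(d), where s_A(d) is the supremum of lengths of d-syndetic sets F ⊆ ℤ with ⋂_{n∈F} T^n(A) ≠ ∅, and w_H(d) = min{ max(H') − min(H') : H' ⊆ H, |H'| = d+1 }. -/
/-- A finite nonempty set `F ⊆ ℤ` is `d`-syndetic if consecutive gaps are at most `d`:
every element of `F` having some element of `F` above it has a further element of `F`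
within distance `d` above it. -/
def IsSyndetic (d : ℕ) (F : Finset ℤ) : Prop :=
  F.Nonempty ∧ ∀ m ∈ F, ∀ m' ∈ F, m < m' → ∃ m'' ∈ F, m < m'' ∧ m'' ≤ m + (d : ℤ)

/-- The length `max F - min F` of a finite set `F ⊆ ℤ` (junk value `0` if `F = ∅`). -/
noncomputable def synLen (F : Finset ℤ) : ℤ :=
  if h : F.Nonempty then F.max' h - F.min' h else 0

lemma key_stmt6 {X : Type*} (T : Equiv.Perm X) (A : Set X) (d : ℕ) (F H' : Finset ℤ)
    (hF : IsSyndetic d F) (x : X) (hx : ∀ n ∈ F, (T ^ n) x ∈ A)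
    (hcard : H'.card = d + 1)
    (hdisj : (H' : Set ℤ).Pairwise fun h h' => Disjoint ((T ^ h) '' A) ((T ^ h') '' A)) :
    synLen F + d ≤ synLen H' := by
  obtain ⟨hFne, hsyn⟩ := hF
  have hH'ne : H'.Nonempty := Finset.card_pos.mp (by omega)
  rw [synLen, dif_pos hFne, synLen, dif_pos hH'ne]
  by_contra hlt
  push_neg at hlt
  set a0 := F.min' hFne with ha0
  set a1 := F.max' hFne with ha1
  set h0 := H'.min' hH'ne with hh0
  have hsel : ∀ h : ℤ, ∃ n : ℤ, h ∈ H' →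
      n ∈ F ∧ 0 ≤ a0 + (h - h0) - n ∧ a0 + (h - h0) - n ≤ (d : ℤ) - 1 := by
    intro h
    by_cases hh : h ∈ H'
    · have hh0le : h0 ≤ h := H'.min'_le h hh
      have hhle : h ≤ H'.max' hH'ne := H'.le_max' h hh
      set a := a0 + (h - h0) with ha
      have ha0a : a0 ≤ a := by omega
      set G := F.filter (fun m => m ≤ a) with hG
      have hGne : G.Nonempty := ⟨a0, Finset.mem_filter.mpr ⟨F.min'_mem hFne, ha0a⟩⟩
      set n := G.max' hGne with hn
      have hnG : n ∈ G := G.max'_mem hGne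
      have hnF : n ∈ F := (Finset.mem_filter.mp hnG).1
      have hna : n ≤ a := (Finset.mem_filter.mp hnG).2
      refine ⟨n, fun _ => ⟨hnF, by omega, ?_⟩⟩
      have hna1 : n ≤ a1 := F.le_max' n hnF
      rcases eq_or_lt_of_le hna1 with heq | hlt2
      · omega
      · obtain ⟨n'', hn''F, hn''gt, hn''le⟩ := hsyn n hnF a1 (F.max'_mem hFne) hlt2
        have : ¬ (n'' ≤ a) := fun hle =>
          absurd (G.le_max' n'' (Finset.mem_filter.mpr ⟨hn''F, hle⟩)) (by omega)
        omega
    · exact ⟨0, fun h' => absurd h' hh⟩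
  choose nF hnF using hsel
  have hmaps : ∀ h ∈ H', (a0 + (h - h0) - nF h) ∈ Finset.Icc (0 : ℤ) ((d : ℤ) - 1) := by
    intro h hh
    obtain ⟨_, h1, h2⟩ := hnF h hh
    exact Finset.mem_Icc.mpr ⟨h1, h2⟩
  have hcardIcc : (Finset.Icc (0 : ℤ) ((d : ℤ) - 1)).card = d := by
    rw [Int.card_Icc]; omega
  have hcardlt : (Finset.Icc (0 : ℤ) ((d : ℤ) - 1)).card < H'.card := by omega
  obtain ⟨h, hh, h', hh', hne, heq⟩ :=
    Finset.exists_ne_map_eq_of_card_lt_of_maps_to hcardlt hmaps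
  obtain ⟨hnFmem, _, _⟩ := hnF h hh
  obtain ⟨hnF'mem, _, _⟩ := hnF h' hh'
  have hsum : h + nF h' = h' + nF h := by omega
  have hp1 : (T ^ (h + nF h')) x ∈ (T ^ h) '' A := by
    rw [zpow_add]
    exact ⟨(T ^ nF h') x, hx _ hnF'mem, rfl⟩
  have hp2 : (T ^ (h + nF h')) x ∈ (T ^ h') '' A := by
    rw [hsum, zpow_add]
    exact ⟨(T ^ nF h) x, hx _ hnFmem, rfl⟩
  exact Set.disjoint_left.mp (hdisj hh hh' hne) hp1 hp2

/-- If `A ⊆ X` is weakly wandering with respect to an infinite `H ⊆ ℤ`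
(for a `ℤ`-action given by a bijection `T`), then for every `d`,
`s_A(d) + d ≤ w_H(d)`, where `s_A(d)` is the supremum of lengths of `d`-syndetic sets
`F ⊆ ℤ` with `⋂_{n ∈ F} T^n(A) ≠ ∅` and
`w_H(d) = min { max H' - min H' : H' ⊆ H, |H'| = d + 1 }`. -/
theorem stmt_6 {X : Type*} (T : Equiv.Perm X) (A : Set X) (H : Set ℤ)
    (hH : H.Infinite)
    (hww : H.Pairwise fun h h' => Disjoint ((T ^ h) '' A) ((T ^ h') '' A))
    (d : ℕ) :
    sSup {l : ℕ∞ | ∃ F : Finset ℤ, IsSyndetic d F ∧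
        (∃ x : X, ∀ n ∈ F, (T ^ n) x ∈ A) ∧ l = ((synLen F).toNat : ℕ∞)}
      + (d : ℕ∞) ≤
    sInf {w : ℕ∞ | ∃ H' : Finset ℤ, ↑H' ⊆ H ∧ H'.card = d + 1 ∧
        w = ((synLen H').toNat : ℕ∞)} := by
  refine le_sInf fun w hw => ?_
  obtain ⟨H', hsub, hcard, rfl⟩ := hw
  have hH'ne : H'.Nonempty := Finset.card_pos.mp (by omega)
  have hdw : (d : ℤ) ≤ synLen H' := by
    have hsub2 : H' ⊆ Finset.Icc (H'.min' hH'ne) (H'.max' hH'ne) :=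
      fun y hy => Finset.mem_Icc.mpr ⟨H'.min'_le y hy, H'.le_max' y hy⟩
    have hc := Finset.card_le_card hsub2
    rw [Int.card_Icc] at hc
    rw [synLen, dif_pos hH'ne]
    omega
  have hd' : (d : ℕ∞) ≤ ((synLen H').toNat : ℕ∞) := by
    have : d ≤ (synLen H').toNat := by omega
    exact_mod_cast this
  have hmain : sSup {l : ℕ∞ | ∃ F : Finset ℤ, IsSyndetic d F ∧
      (∃ x : X, ∀ n ∈ F, (T ^ n) x ∈ A) ∧ l = ((synLen F).toNat : ℕ∞)}
      ≤ ((synLen H').toNat : ℕ∞) - d := by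
    refine sSup_le fun l hl => ?_
    obtain ⟨F, hF, ⟨x, hx⟩, rfl⟩ := hl
    have hk := key_stmt6 T A d F H' hF x hx hcard (hww.mono hsub)
    have h0 : (0 : ℤ) ≤ synLen F := by
      rw [synLen, dif_pos hF.1]
      have := F.min'_le (F.max' hF.1) (F.max'_mem hF.1)
      omega
    have hnat : (synLen F).toNat + d ≤ (synLen H').toNat := by omega
    rw [← ENat.coe_sub]
    exact_mod_cast (by omega : (synLen F).toNat ≤ (synLen H').toNat - d)
  calc sSup {l : ℕ∞ | ∃ F : Finset ℤ, IsSyndetic d F ∧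
      (∃ x : X, ∀ n ∈ F, (T ^ n) x ∈ A) ∧ l = ((synLen F).toNat : ℕ∞)} + (d : ℕ∞)
      ≤ (((synLen H').toNat : ℕ∞) - d) + d := add_le_add hmain le_rfl
    _ = ((synLen H').toNat : ℕ∞) := tsub_add_cancel_of_le hd'
end

section
/- Let T : X → X be a bijection of a set X and A ⊆ X. If for some d ≥ 1 the set A contains arbitrarily long d-syndetic sets (i.e., for every l there is a d-syndetic set F ⊆ ℤ of length ≥ l with ⋂_{n∈F} T^n(A) ≠ ∅), then A is not weakly wandering: for every infinite H ⊆ ℤ the translates T^h(A), h ∈ H, are not pairwise disjoint. -/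
lemma syndetic_hit {d : ℕ} (hd : 1 ≤ d) {F : Finset ℤ} (hF : IsSyndetic d F) (t : ℤ)
    (ht0 : 0 ≤ t) (ht : t ≤ F.max' hF.1 - F.min' hF.1) :
    ∃ m ∈ F, F.min' hF.1 + t ≤ m ∧ m < F.min' hF.1 + t + d := by
  obtain ⟨hne, hsyn⟩ := hF
  set a := F.min' hne with ha
  set b := F.max' hne with hb
  rcases eq_or_lt_of_le ht0 with h0 | h0
  · exact ⟨a, F.min'_mem hne, by omega, by omega⟩
  · set S₁ := F.filter (fun m => m < a + t) with hS₁
    have haS₁ : a ∈ S₁ := by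
      simp only [hS₁, Finset.mem_filter]
      exact ⟨F.min'_mem hne, by omega⟩
    set m := S₁.max' ⟨a, haS₁⟩ with hm
    have hmS₁ : m ∈ S₁ := S₁.max'_mem _
    have hmF : m ∈ F := (Finset.mem_filter.mp hmS₁).1
    have hmlt : m < a + t := (Finset.mem_filter.mp hmS₁).2
    have hmb : m < b := by
      have := ht; omega
    obtain ⟨m'', hm''F, hlt, hle⟩ := hsyn m hmF b (F.max'_mem hne) hmb
    refine ⟨m'', hm''F, ?_, by omega⟩
    by_contra hc
    push_neg at hc
    have : m'' ∈ S₁ := Finset.mem_filter.mpr ⟨hm''F, hc⟩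
    have := S₁.le_max' m'' this
    omega

/-- If for some `d ≥ 1` the set `A ⊆ X` contains arbitrarily long
`d`-syndetic sets (for every `l` there is a `d`-syndetic `F ⊆ ℤ` of length `≥ l` with
`⋂_{n ∈ F} T^n(A) ≠ ∅`), then `A` is not weakly wandering: for every infinite `H ⊆ ℤ`
the translates `T^h(A)`, `h ∈ H`, are not pairwise disjoint. -/
theorem stmt_7 {X : Type*} (T : Equiv.Perm X) (A : Set X) (d : ℕ) (hd : 1 ≤ d)
    (harb : ∀ l : ℕ, ∃ F : Finset ℤ, IsSyndetic d F ∧ (l : ℤ) ≤ synLen F ∧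
      ∃ x : X, ∀ n ∈ F, (T ^ n) x ∈ A) :
    ∀ H : Set ℤ, H.Infinite →
      ¬ H.Pairwise fun h h' => Disjoint ((T ^ h) '' A) ((T ^ h') '' A) := by
  intro H hH hPair
  obtain ⟨S, hSsub, hScard⟩ := hH.exists_subset_card_eq (d + 1)
  have hSne : S.Nonempty := by rw [← Finset.card_pos, hScard]; omega
  set h₀ := S.min' hSne with hh₀
  set L := (S.max' hSne - h₀).toNat with hL
  obtain ⟨F, hF, hlen, x, hx⟩ := harb L
  have hne := hF.1
  set a := F.min' hne with ha
  set b := F.max' hne with hb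
  have hlen' : (L : ℤ) ≤ b - a := by
    rw [synLen, dif_pos hne] at hlen; exact hlen
  have hLval : (L : ℤ) = S.max' hSne - h₀ := by
    rw [hL]
    exact Int.toNat_of_nonneg (by have := S.min'_le (S.max' hSne) (S.max'_mem hSne); omega)
  have key : ∀ h : ℤ, ∃ m : ℤ, h ∈ S →
      m ∈ F ∧ a + (h - h₀) ≤ m ∧ m < a + (h - h₀) + d := by
    intro h
    by_cases hh : h ∈ S
    · have h1 : h₀ ≤ h := S.min'_le h hh
      have h2 : h ≤ S.max' hSne := S.le_max' h hh
      obtain ⟨m, hmF, hm1, hm2⟩ := syndetic_hit hd hF (h - h₀) (by omega) (by omega)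
      exact ⟨m, fun _ => ⟨hmF, hm1, hm2⟩⟩
    · exact ⟨0, fun h' => absurd h' hh⟩
  choose f hf using key
  have maps : ∀ h ∈ S, f h - h ∈ Finset.Ico (a - h₀) (a - h₀ + d) := by
    intro h hh
    obtain ⟨_, h1, h2⟩ := hf h hh
    simp only [Finset.mem_Ico]
    omega
  have hcard : (Finset.Ico (a - h₀) (a - h₀ + d)).card < S.card := by
    rw [hScard, Int.card_Ico]
    simp only [add_sub_cancel_left]
    omega
  obtain ⟨h, hh, h', hh', hne', heq⟩ :=
    Finset.exists_ne_map_eq_of_card_lt_of_maps_to hcard maps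
  obtain ⟨hfF, _, _⟩ := hf h hh
  obtain ⟨hfF', _, _⟩ := hf h' hh'
  have hdisj := hPair (hSsub hh) (hSsub hh') hne'
  have hy1 : (T ^ (h + f h')) x ∈ (T ^ h) '' A := by
    refine ⟨(T ^ (f h')) x, hx _ hfF', ?_⟩
    rw [← Equiv.Perm.mul_apply, ← zpow_add]
  have hy2 : (T ^ (h + f h')) x ∈ (T ^ h') '' A := by
    refine ⟨(T ^ (f h)) x, hx _ hfF, ?_⟩
    rw [← Equiv.Perm.mul_apply, ← zpow_add]
    have heq' : f h - h = f h' - h' := heq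
    have : h + f h' = h' + f h := by omega
    rw [this]
  exact Set.disjoint_left.mp hdisj hy1 hy2
end

section
/- Let T be a homeomorphism of a Polish space X. Suppose that for every nonempty open V ⊆ X there exists d ≥ 1 such that V contains arbitrarily long d-syndetic sets, i.e., ⋂_{n∈F} T^n(V) ≠ ∅ for d-syndetic sets F ⊆ ℤ of arbitrarily large length. Then X admits no non-meager Baire measurable weakly wandering subset. -/
section Aux

variable {X : Type*} [TopologicalSpace X]

lemma cont_perm_pow (S : Equiv.Perm X) (hS : Continuous S) (n : ℕ) :
    Continuous ⇑(S ^ n) := by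
  induction n with
  | zero => simpa using continuous_id
  | succ k ih =>
      rw [pow_succ, Equiv.Perm.coe_mul]
      exact ih.comp hS

lemma cont_perm_zpow (T : Equiv.Perm X) (hT : Continuous T) (hT' : Continuous T.symm)
    (n : ℤ) : Continuous ⇑(T ^ n) := by
  cases n with
  | ofNat m => rw [Int.ofNat_eq_coe, zpow_natCast]; exact cont_perm_pow T hT m
  | negSucc m =>
      rw [zpow_negSucc, ← inv_pow]
      exact cont_perm_pow T⁻¹ (by rw [Equiv.Perm.inv_def]; exact hT') (m + 1)

/-- `T ^ n` as a homeomorphism. -/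
noncomputable def permZpowHomeo (T : Equiv.Perm X) (hT : Continuous T)
    (hT' : Continuous T.symm) (n : ℤ) : X ≃ₜ X where
  toEquiv := T ^ n
  continuous_toFun := cont_perm_zpow T hT hT' n
  continuous_invFun := by
    show Continuous ⇑(T ^ n).symm
    have h : (T ^ n).symm = T ^ (-n) := by
      rw [zpow_neg, Equiv.Perm.inv_def]
    rw [h]
    exact cont_perm_zpow T hT hT' (-n)

/-- Window lemma: a `d`-syndetic set hits every window `(min+k-d, min+k]` for `0 ≤ k ≤ len`. -/
lemma syndetic_window {d : ℕ} {F : Finset ℤ} (hF : IsSyndetic d F) (hd : 1 ≤ d) (k : ℤ)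
    (hk0 : 0 ≤ k) (hkL : k ≤ synLen F) :
    ∃ f ∈ F, F.min' hF.1 + k - (d : ℤ) < f ∧ f ≤ F.min' hF.1 + k := by
  obtain ⟨hne, hsyn⟩ := hF
  set m := F.min' hne with hm
  have hLen : synLen F = F.max' hne - m := by rw [synLen, dif_pos hne]
  set G := F.filter (fun f => f ≤ m + k) with hG
  have hGne : G.Nonempty := ⟨m, by
    simp only [hG, Finset.mem_filter]
    exact ⟨F.min'_mem hne, by omega⟩⟩
  set f := G.max' hGne with hf
  have hfG : f ∈ G := G.max'_mem hGne
  have hfF : f ∈ F := (Finset.mem_filter.mp hfG).1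
  have hfle : f ≤ m + k := (Finset.mem_filter.mp hfG).2
  refine ⟨f, hfF, ?_, hfle⟩
  by_contra hcon
  push_neg at hcon
  have hfmax : f < F.max' hne := by omega
  obtain ⟨f'', hf''F, hlt, hle⟩ := hsyn f hfF (F.max' hne) (F.max'_mem hne) hfmax
  have hf''G : f'' ∈ G := Finset.mem_filter.mpr ⟨hf''F, by omega⟩
  have := G.le_max' f'' hf''G
  omega

end Aux

/-- Let `T` be a homeomorphism of a Polish space `X` such that every
nonempty open `V ⊆ X` contains arbitrarily long `d`-syndetic sets for some `d ≥ 1`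
(i.e. `⋂_{n ∈ F} T^n(V) ≠ ∅` for `d`-syndetic `F ⊆ ℤ` of arbitrarily large length).
Then `X` admits no non-meager Baire measurable weakly wandering subset. -/
theorem stmt_8 {X : Type*} [TopologicalSpace X] [PolishSpace X]
    (T : Equiv.Perm X) (hT : Continuous T) (hT' : Continuous T.symm)
    (hyp : ∀ V : Set X, IsOpen V → V.Nonempty → ∃ d : ℕ, 1 ≤ d ∧
      ∀ l : ℕ, ∃ F : Finset ℤ, IsSyndetic d F ∧ (l : ℤ) ≤ synLen F ∧
        (⋂ n ∈ F, (T ^ n) '' V).Nonempty) :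
    ¬ ∃ A : Set X, BaireMeasurableSet A ∧ ¬ IsMeagre A ∧
      ∃ H : Set ℤ, H.Infinite ∧
        H.Pairwise fun h h' => Disjoint ((T ^ h) '' A) ((T ^ h') '' A) := by
  letI := TopologicalSpace.upgradeIsCompletelyMetrizable X
  rintro ⟨A, hA, hnm, H, hHinf, hHdisj⟩
  set e : ℤ → X ≃ₜ X := permZpowHomeo T hT hT' with he
  have hecoe : ∀ n : ℤ, ⇑(e n) = ⇑(T ^ n) := fun n => rfl
  -- Baire property: open U with A =ᵇ U
  obtain ⟨U, hUopen, hAU⟩ := hA.residualEq_isOpen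
  set M : Set X := (A \ U) ∪ (U \ A) with hMdef
  have hMmem : ∀ᶠ x in residual X, x ∉ M := by
    have h := Filter.eventuallyEq_set.mp hAU
    filter_upwards [h] with x hx
    simp only [hMdef, Set.mem_union, Set.mem_diff]
    tauto
  have hM : IsMeagre M := by
    rw [IsMeagre]
    exact hMmem
  have hUA : U \ M ⊆ A := by
    intro x hx
    rcases hx with ⟨hxU, hxM⟩
    by_contra hxA
    exact hxM (Or.inr ⟨hxU, hxA⟩)
  have hUne : U.Nonempty := by
    rcases Set.eq_empty_or_nonempty U with h | h
    · exfalso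
      apply hnm
      apply hM.mono
      intro x hx
      exact Or.inl ⟨hx, by simp [h]⟩
    · exact h
  obtain ⟨d, hd1, hsyn⟩ := hyp U hUopen hUne
  -- pick d+1 elements of H
  obtain ⟨B, hBH, hBcard⟩ := hHinf.exists_subset_card_eq (d + 1)
  have hBne : B.Nonempty := Finset.card_pos.mp (by omega)
  set h₀ := B.min' hBne with hh₀
  set l : ℕ := (B.max' hBne - h₀).toNat with hl
  have hlval : (l : ℤ) = B.max' hBne - h₀ := by
    have := B.min'_le (B.max' hBne) (B.max'_mem hBne)
    omega
  obtain ⟨F, hFsyn, hFlen, x, hx⟩ := hsyn l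
  have hFne : F.Nonempty := hFsyn.1
  -- the meager union and the open intersection
  have hMn : ∀ n : ℤ, IsMeagre ((T ^ n) '' M) := by
    intro n
    have himg : (T ^ n) '' M = ⇑(e n).symm ⁻¹' M := (T ^ n).image_eq_preimage_symm M
    rw [himg]
    exact hM.preimage_of_isOpenMap (e n).symm.continuous (e n).symm.isOpenMap
  have hcom : (⋃ n ∈ F, (T ^ n) '' M)ᶜ ∈ residual X := by
    rw [Set.compl_iUnion₂]
    exact (Filter.biInter_mem F.finite_toSet).mpr fun n _ => hMn n
  have hWopen : IsOpen (⋂ n ∈ F, (T ^ n) '' U) := by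
    apply isOpen_biInter_finset
    intro n _
    have := (e n).isOpenMap U hUopen
    rwa [hecoe] at this
  have hWne : (⋂ n ∈ F, (T ^ n) '' U).Nonempty := ⟨x, hx⟩
  obtain ⟨y, hyD, hyW⟩ := (dense_of_mem_residual hcom).exists_mem_open hWopen hWne
  have hyA : ∀ n ∈ F, y ∈ (T ^ n) '' A := by
    intro n hn
    have hyU : y ∈ (T ^ n) '' U := by
      have := Set.mem_iInter₂.mp hyW n hn
      exact this
    obtain ⟨u, hu, rfl⟩ := hyU
    refine ⟨u, ?_, rfl⟩
    by_contra hua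
    apply hyD
    exact Set.mem_biUnion hn ⟨u, Or.inr ⟨hu, hua⟩, rfl⟩
  -- window selection for each b ∈ B
  have hwin : ∀ b ∈ B, ∃ f ∈ F, F.min' hFne + (b - h₀) - (d : ℤ) < f ∧
      f ≤ F.min' hFne + (b - h₀) := by
    intro b hb
    have h1 : 0 ≤ b - h₀ := by
      have := B.min'_le b hb
      omega
    have h2 : b - h₀ ≤ synLen F := by
      have := B.le_max' b hb
      omega
    have := syndetic_window hFsyn hd1 (b - h₀) h1 h2
    convert this using 4
  choose! f hfF hflt hfle using hwin
  -- pigeonhole on residues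
  have hmaps : ∀ b ∈ B, (F.min' hFne + (b - h₀) - f b).toNat ∈ Finset.range d := by
    intro b hb
    have h1 := hflt b hb
    have h2 := hfle b hb
    simp only [Finset.mem_range]
    omega
  obtain ⟨b, hb, b', hb', hbb', heq⟩ :=
    Finset.exists_ne_map_eq_of_card_lt_of_maps_to
      (by rw [hBcard, Finset.card_range]; omega) hmaps
  have hdiff : b - f b = b' - f b' := by
    have h1 := hflt b hb
    have h2 := hfle b hb
    have h3 := hflt b' hb'
    have h4 := hfle b' hb'
    omega
  -- derive the contradiction
  obtain ⟨a, haA, hay⟩ := hyA (f b) (hfF b hb)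
  obtain ⟨a', haA', hay'⟩ := hyA (f b') (hfF b' hb')
  have hz : (T ^ (b - f b)) y ∈ ((T ^ b) '' A) ∩ ((T ^ b') '' A) := by
    constructor
    · refine ⟨a, haA, ?_⟩
      rw [← hay, ← Equiv.Perm.mul_apply, ← zpow_add]
      ring_nf
    · refine ⟨a', haA', ?_⟩
      rw [hdiff, ← hay', ← Equiv.Perm.mul_apply, ← zpow_add]
      ring_nf
  have hdis := hHdisj (hBH hb) (hBH hb') hbb'
  exact (Set.disjoint_left.mp hdis hz.1) hz.2
end

section
/- Let X be a second countable Hausdorff space on which a countable group G acts by homeomorphisms. Let 𝒰 be a countable base for X closed under the G-action and under finite unions and intersections, and let ρ be a G-invariant finitely additive probability measure on the algebra of sets generated by 𝒰. Define the outer measure μ*(A) = inf { Σ_n ρ(U_n) : U_n ∈ 𝒰, A ⊆ ⋃_n U_n }. Then μ* is a G-invariant outer measure, and for every compact K ⊆ X, μ* restricted to subsets of K is a metric outer measure with respect to any compatible metric on K: if E, F ⊆ K are at positive distance apart, then μ*(E ∪ F) = μ*(E) + μ*(F). -/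
open scoped ENNReal Pointwise

/-- The algebra of sets generated by a family `S` of subsets of `X`. -/
inductive SetAlg {X : Type*} (S : Set (Set X)) : Set X → Prop
  | basic : ∀ A ∈ S, SetAlg S A
  | empty : SetAlg S ∅
  | compl : ∀ A, SetAlg S A → SetAlg S Aᶜ
  | union : ∀ A B, SetAlg S A → SetAlg S B → SetAlg S (A ∪ B)

/-- The outer measure `μ*(A) = inf { Σₙ ρ(Uₙ) : Uₙ ∈ 𝒰, A ⊆ ⋃ₙ Uₙ }` determined by a
set function `ρ` on a family `𝒰` of sets (covers are allowed to be padded by `∅`). -/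
noncomputable def muStar {X : Type*} (𝒰 : Set (Set X)) (ρ : Set X → ℝ≥0∞)
    (A : Set X) : ℝ≥0∞ :=
  ⨅ (U : ℕ → Set X) (_ : ∀ n, U n ∈ 𝒰 ∪ {∅}) (_ : A ⊆ ⋃ n, U n), ∑' n, ρ (U n)

section Aux

variable {X : Type*} {𝒰 : Set (Set X)} {ρ : Set X → ℝ≥0∞}

lemma SetAlg.inter' {A B : Set X} (hA : SetAlg 𝒰 A) (hB : SetAlg 𝒰 B) :
    SetAlg 𝒰 (A ∩ B) := by
  have : A ∩ B = (Aᶜ ∪ Bᶜ)ᶜ := by simp [Set.compl_union]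
  rw [this]
  exact SetAlg.compl _ (SetAlg.union _ _ (SetAlg.compl _ hA) (SetAlg.compl _ hB))

lemma setAlg_of_mem {U : Set X} (hU : U ∈ 𝒰 ∪ {∅}) : SetAlg 𝒰 U := by
  rcases hU with h | h
  · exact SetAlg.basic _ h
  · simp only [Set.mem_singleton_iff] at h
    rw [h]; exact SetAlg.empty

lemma rho_empty (hρ1 : ρ Set.univ = 1)
    (hρadd : ∀ A B : Set X, SetAlg 𝒰 A → SetAlg 𝒰 B → Disjoint A B →
      ρ (A ∪ B) = ρ A + ρ B) : ρ ∅ = 0 := by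
  have huniv : SetAlg 𝒰 (Set.univ : Set X) := by
    have : (Set.univ : Set X) = (∅ : Set X)ᶜ := by simp
    rw [this]; exact SetAlg.compl _ SetAlg.empty
  have h := hρadd Set.univ ∅ huniv SetAlg.empty (disjoint_bot_right)
  rw [Set.union_empty, hρ1] at h
  have : (1 : ℝ≥0∞) + 0 = 1 + ρ ∅ := by rw [add_zero]; exact h
  exact ((ENNReal.add_right_inj ENNReal.one_ne_top).mp this).symm

lemma rho_mono (hρadd : ∀ A B : Set X, SetAlg 𝒰 A → SetAlg 𝒰 B → Disjoint A B →
      ρ (A ∪ B) = ρ A + ρ B)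
    {A B : Set X} (hA : SetAlg 𝒰 A) (hB : SetAlg 𝒰 B) (hAB : A ⊆ B) :
    ρ A ≤ ρ B := by
  have hBA : SetAlg 𝒰 (B \ A) := by
    rw [Set.diff_eq]; exact hB.inter' (SetAlg.compl _ hA)
  have h : ρ B = ρ A + ρ (B \ A) := by
    rw [← hρadd A (B \ A) hA hBA disjoint_sdiff_self_right, Set.union_diff_cancel hAB]
  rw [h]; exact le_self_add

/-- The auxiliary set function extending `ρ` by `⊤` off `𝒰 ∪ {∅}`. -/
noncomputable def rhoExt (𝒰 : Set (Set X)) (ρ : Set X → ℝ≥0∞) : Set X → ℝ≥0∞ :=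
  fun s => ⨅ (_ : s ∈ 𝒰 ∪ {∅}), ρ s

lemma rhoExt_of_mem {s : Set X} (h : s ∈ 𝒰 ∪ {∅}) : rhoExt 𝒰 ρ s = ρ s :=
  iInf_pos h

lemma rhoExt_of_not_mem {s : Set X} (h : s ∉ 𝒰 ∪ {∅}) : rhoExt 𝒰 ρ s = ⊤ :=
  iInf_neg h

lemma rhoExt_empty (hρ0 : ρ ∅ = 0) : rhoExt 𝒰 ρ ∅ = 0 := by
  rw [rhoExt_of_mem (Or.inr rfl), hρ0]

lemma muStar_eq_ofFunction (hρ0 : ρ ∅ = 0) (A : Set X) :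
    muStar 𝒰 ρ A
      = MeasureTheory.OuterMeasure.ofFunction (rhoExt 𝒰 ρ) (rhoExt_empty hρ0) A := by
  rw [MeasureTheory.OuterMeasure.ofFunction_apply]
  apply le_antisymm
  · refine le_iInf fun f => le_iInf fun hf => ?_
    by_cases hall : ∀ n, f n ∈ 𝒰 ∪ {∅}
    · have : muStar 𝒰 ρ A ≤ ∑' n, ρ (f n) :=
        iInf_le_of_le f (iInf_le_of_le hall (iInf_le _ hf))
      refine this.trans (le_of_eq (tsum_congr fun n => ?_))
      exact (rhoExt_of_mem (hall n)).symm
    · push_neg at hall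
      obtain ⟨n, hn⟩ := hall
      have htop : rhoExt 𝒰 ρ (f n) = ⊤ := rhoExt_of_not_mem hn
      have : (∑' n, rhoExt 𝒰 ρ (f n)) = ⊤ :=
        top_le_iff.mp (htop ▸ ENNReal.le_tsum n)
      rw [this]; exact le_top
  · refine le_iInf fun U => le_iInf fun hU => le_iInf fun hcov => ?_
    refine iInf_le_of_le U (iInf_le_of_le hcov (le_of_eq (tsum_congr fun n => ?_)))
    exact rhoExt_of_mem (hU n)

lemma finset_biUnion_mem (h𝒰u : ∀ U ∈ 𝒰, ∀ V ∈ 𝒰, U ∪ V ∈ 𝒰)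
    {ι : Type*} (s : Finset ι) (f : ι → Set X) (hf : ∀ i ∈ s, f i ∈ 𝒰) :
    (⋃ i ∈ s, f i) ∈ 𝒰 ∪ {∅} := by
  classical
  induction s using Finset.induction_on with
  | empty => simp
  | @insert a s ha ih =>
    rw [Finset.set_biUnion_insert]
    have hfa : f a ∈ 𝒰 := hf a (Finset.mem_insert_self a s)
    rcases ih (fun i hi => hf i (Finset.mem_insert_of_mem hi)) with h | h
    · exact Or.inl (h𝒰u _ hfa _ h)
    · simp only [Set.mem_singleton_iff] at h
      rw [h, Set.union_empty]
      exact Or.inl hfa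

lemma exists_basis_cover [TopologicalSpace X] {𝒱 : Set (Set X)}
    (h𝒰b : TopologicalSpace.IsTopologicalBasis 𝒱)
    (h𝒰u : ∀ U ∈ 𝒱, ∀ V ∈ 𝒱, U ∪ V ∈ 𝒱) {C O : Set X} (hC : IsCompact C) (hO : IsOpen O)
    (hCO : C ⊆ O) : ∃ A, A ∈ 𝒱 ∪ {∅} ∧ C ⊆ A ∧ A ⊆ O := by
  have hW : ∀ x : C, ∃ W, W ∈ 𝒱 ∧ (x : X) ∈ W ∧ W ⊆ O := fun x =>
    h𝒰b.exists_subset_of_mem_open (hCO x.2) hO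
  choose W hWmem hWx hWO using hW
  have hcover : C ⊆ ⋃ x : C, W x := fun x hx =>
    Set.mem_iUnion.mpr ⟨⟨x, hx⟩, hWx ⟨x, hx⟩⟩
  obtain ⟨t, ht⟩ := hC.elim_finite_subcover W
    (fun x => h𝒰b.isOpen (hWmem x)) hcover
  refine ⟨⋃ i ∈ t, W i, finset_biUnion_mem h𝒰u t W (fun i _ => hWmem i), ht, ?_⟩
  exact Set.iUnion₂_subset fun i _ => hWO i

end Aux

/-- Let a countable group `G` act by homeomorphisms on a second
countable Hausdorff space `X`, let `𝒰` be a countable base closed under the `G`-action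
and under finite unions and intersections, and let `ρ` be a `G`-invariant finitely
additive probability measure on the algebra generated by `𝒰`. Then the outer measure
`μ* = muStar 𝒰 ρ` is a `G`-invariant outer measure, every compact `K ⊆ X` is
metrizable, and `μ*` is a metric outer measure on `K` with respect to any compatible
metric: if `E, F ⊆ K` are at positive distance apart, then
`μ*(E ∪ F) = μ*(E) + μ*(F)`. -/
theorem stmt_11 {G X : Type*} [Group G] [Countable G] [TopologicalSpace X] [T2Space X]
    [SecondCountableTopology X] [MulAction G X]
    (hcont : ∀ g : G, Continuous fun x : X => g • x)
    (𝒰 : Set (Set X)) (h𝒰c : 𝒰.Countable)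
    (h𝒰b : TopologicalSpace.IsTopologicalBasis 𝒰)
    (h𝒰G : ∀ (g : G), ∀ U ∈ 𝒰, g • U ∈ 𝒰)
    (h𝒰u : ∀ U ∈ 𝒰, ∀ V ∈ 𝒰, U ∪ V ∈ 𝒰)
    (h𝒰i : ∀ U ∈ 𝒰, ∀ V ∈ 𝒰, U ∩ V ∈ 𝒰)
    (ρ : Set X → ℝ≥0∞) (hρ1 : ρ Set.univ = 1)
    (hρadd : ∀ A B : Set X, SetAlg 𝒰 A → SetAlg 𝒰 B → Disjoint A B →
      ρ (A ∪ B) = ρ A + ρ B)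
    (hρinv : ∀ (g : G) (A : Set X), SetAlg 𝒰 A → ρ (g • A) = ρ A) :
    muStar 𝒰 ρ ∅ = 0 ∧
    (∀ A B : Set X, A ⊆ B → muStar 𝒰 ρ A ≤ muStar 𝒰 ρ B) ∧
    (∀ s : ℕ → Set X, muStar 𝒰 ρ (⋃ n, s n) ≤ ∑' n, muStar 𝒰 ρ (s n)) ∧
    (∀ (g : G) (A : Set X), muStar 𝒰 ρ (g • A) = muStar 𝒰 ρ A) ∧
    (∀ K : Set X, IsCompact K →
      (∃ m : MetricSpace K,
        m.toUniformSpace.toTopologicalSpace = (inferInstance : TopologicalSpace K)) ∧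
      ∀ m : MetricSpace K,
        m.toUniformSpace.toTopologicalSpace = (inferInstance : TopologicalSpace K) →
        ∀ E F : Set X, E ⊆ K → F ⊆ K →
          (∃ ε : ℝ, 0 < ε ∧ ∀ x y : K, (x : X) ∈ E → (y : X) ∈ F →
            ε ≤ m.dist x y) →
          muStar 𝒰 ρ (E ∪ F) = muStar 𝒰 ρ E + muStar 𝒰 ρ F) := by
  have hρ0 : ρ ∅ = 0 := rho_empty hρ1 hρadd
  have hEq := muStar_eq_ofFunction (𝒰 := 𝒰) hρ0
  -- G-invariance, one direction
  have hsmul_le : ∀ (g : G) (A : Set X), muStar 𝒰 ρ (g • A) ≤ muStar 𝒰 ρ A := by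
    intro g A
    refine le_iInf fun U => le_iInf fun hU => le_iInf fun hcov => ?_
    have h1 : ∀ n, g • U n ∈ 𝒰 ∪ {∅} := by
      intro n
      rcases hU n with h | h
      · exact Or.inl (h𝒰G g _ h)
      · simp only [Set.mem_singleton_iff] at h
        right; simp [h]
    have h2 : g • A ⊆ ⋃ n, g • U n := by
      rw [← Set.smul_set_iUnion]
      exact Set.smul_set_mono hcov
    have h3 : muStar 𝒰 ρ (g • A) ≤ ∑' n, ρ (g • U n) :=
      iInf_le_of_le (fun n => g • U n) (iInf_le_of_le h1 (iInf_le _ h2))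
    refine h3.trans (le_of_eq (tsum_congr fun n => ?_))
    exact hρinv g _ (setAlg_of_mem (hU n))
  refine ⟨?_, ?_, ?_, ?_, ?_⟩
  · rw [hEq]; exact MeasureTheory.measure_empty
  · intro A B hAB
    rw [hEq, hEq]
    exact MeasureTheory.measure_mono hAB
  · intro s
    rw [hEq]
    refine (MeasureTheory.measure_iUnion_le s).trans (le_of_eq ?_)
    exact tsum_congr fun n => (hEq (s n)).symm
  · intro g A
    refine le_antisymm (hsmul_le g A) ?_
    have := hsmul_le g⁻¹ (g • A)
    rwa [inv_smul_smul] at this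
  · intro K hK
    haveI : CompactSpace K := isCompact_iff_compactSpace.mp hK
    constructor
    · exact ⟨TopologicalSpace.metrizableSpaceMetric K, rfl⟩
    · intro m hm E F hE hF ⟨ε, hε, hdist⟩
      -- closures are disjoint
      have hKcl : IsClosed K := hK.isClosed
      have hclE : closure E ⊆ K := closure_minimal hE hKcl
      have hclF : closure F ⊆ K := closure_minimal hF hKcl
      have hdisj_cl : Disjoint (closure E) (closure F) := by
        rw [Set.disjoint_left]
        intro z hzE hzF
        have hzK : z ∈ K := hclE hzE
        set z' : K := ⟨z, hzK⟩
        -- the ball of radius ε/2 around z' is open in the subtype topology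
        set B : Set K := {y : K | m.dist z' y < ε / 2} with hB
        have hBopen : IsOpen B := by
          have h1 : @IsOpen K m.toUniformSpace.toTopologicalSpace B := by
            have := @Metric.isOpen_ball K m.toPseudoMetricSpace z' (ε / 2)
            convert this using 1
            ext y
            simp [hB, Metric.mem_ball, Metric.ball, dist_comm]
          rwa [hm] at h1
        obtain ⟨V, hVopen, hVeq⟩ := isOpen_induced_iff.mp hBopen
        have hzV : z ∈ V := by
          have hz'B : z' ∈ B := by
            rw [hB]
            simp only [Set.mem_setOf_eq, m.dist_self]
            linarith
          have : z' ∈ (Subtype.val ⁻¹' V : Set K) := hVeq ▸ hz'B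
          exact this
        -- pick points of E and F in V
        obtain ⟨e, heV, heE⟩ := mem_closure_iff.mp hzE V hVopen hzV
        obtain ⟨f, hfV, hfF⟩ := mem_closure_iff.mp hzF V hVopen hzV
        have heK : e ∈ K := hE heE
        have hfK : f ∈ K := hF hfF
        have heB : (⟨e, heK⟩ : K) ∈ B := by
          rw [← hVeq]; exact heV
        have hfB : (⟨f, hfK⟩ : K) ∈ B := by
          rw [← hVeq]; exact hfV
        have h1 : m.dist z' ⟨e, heK⟩ < ε / 2 := heB
        have h2 : m.dist z' ⟨f, hfK⟩ < ε / 2 := hfB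
        have h3 : ε ≤ m.dist ⟨e, heK⟩ ⟨f, hfK⟩ := hdist _ _ heE hfF
        have h4 : m.dist ⟨e, heK⟩ ⟨f, hfK⟩ ≤
            m.dist ⟨e, heK⟩ z' + m.dist z' ⟨f, hfK⟩ := m.dist_triangle _ _ _
        rw [m.dist_comm _ z'] at h4
        linarith
      -- separate the closures by disjoint open sets
      have hcE : IsCompact (closure E) := hK.of_isClosed_subset isClosed_closure hclE
      have hcF : IsCompact (closure F) := hK.of_isClosed_subset isClosed_closure hclF
      obtain ⟨OE, OF, hOEo, hOFo, hEOE, hFOF, hOEF⟩ :=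
        SeparatedNhds.of_isCompact_isCompact hcE hcF hdisj_cl
      -- find basis-union separators A, B ∈ 𝒰 ∪ {∅}
      obtain ⟨A, hAmem, hEA, hAO⟩ := exists_basis_cover h𝒰b h𝒰u hcE hOEo hEOE
      obtain ⟨B, hBmem, hFB, hBO⟩ := exists_basis_cover h𝒰b h𝒰u hcF hOFo hFOF
      have hABdisj : Disjoint A B := hOEF.mono hAO hBO
      have hEA' : E ⊆ A := subset_closure.trans hEA
      have hFB' : F ⊆ B := subset_closure.trans hFB
      apply le_antisymm
      · rw [hEq, hEq, hEq]
        exact MeasureTheory.measure_union_le E F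
      -- the substantial inequality
      refine le_iInf fun U => le_iInf fun hU => le_iInf fun hcov => ?_
      have hmemE : ∀ n, U n ∩ A ∈ 𝒰 ∪ {∅} := by
        intro n
        rcases hU n with h | h
        · rcases hAmem with hA | hA
          · exact Or.inl (h𝒰i _ h _ hA)
          · simp only [Set.mem_singleton_iff] at hA
            right; simp [hA]
        · simp only [Set.mem_singleton_iff] at h
          right; simp [h]
      have hmemF : ∀ n, U n ∩ B ∈ 𝒰 ∪ {∅} := by
        intro n
        rcases hU n with h | h
        · rcases hBmem with hB | hB
          · exact Or.inl (h𝒰i _ h _ hB)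
          · simp only [Set.mem_singleton_iff] at hB
            right; simp [hB]
        · simp only [Set.mem_singleton_iff] at h
          right; simp [h]
      have hcovE : E ⊆ ⋃ n, U n ∩ A := by
        rw [← Set.iUnion_inter]
        exact Set.subset_inter ((Set.subset_union_left).trans hcov) hEA'
      have hcovF : F ⊆ ⋃ n, U n ∩ B := by
        rw [← Set.iUnion_inter]
        exact Set.subset_inter ((Set.subset_union_right).trans hcov) hFB'
      have hmu_E : muStar 𝒰 ρ E ≤ ∑' n, ρ (U n ∩ A) :=
        iInf_le_of_le (fun n => U n ∩ A) (iInf_le_of_le hmemE (iInf_le _ hcovE))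
      have hmu_F : muStar 𝒰 ρ F ≤ ∑' n, ρ (U n ∩ B) :=
        iInf_le_of_le (fun n => U n ∩ B) (iInf_le_of_le hmemF (iInf_le _ hcovF))
      calc muStar 𝒰 ρ E + muStar 𝒰 ρ F
          ≤ (∑' n, ρ (U n ∩ A)) + ∑' n, ρ (U n ∩ B) := add_le_add hmu_E hmu_F
        _ = ∑' n, (ρ (U n ∩ A) + ρ (U n ∩ B)) := (ENNReal.tsum_add).symm
        _ ≤ ∑' n, ρ (U n) := by
            refine ENNReal.tsum_le_tsum fun n => ?_
            have hUn : SetAlg 𝒰 (U n) := setAlg_of_mem (hU n)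
            have hA' : SetAlg 𝒰 A := setAlg_of_mem hAmem
            have hB' : SetAlg 𝒰 B := setAlg_of_mem hBmem
            have hUA : SetAlg 𝒰 (U n ∩ A) := hUn.inter' hA'
            have hUB : SetAlg 𝒰 (U n ∩ B) := hUn.inter' hB'
            have hd : Disjoint (U n ∩ A) (U n ∩ B) :=
              hABdisj.mono Set.inter_subset_right Set.inter_subset_right
            rw [← hρadd _ _ hUA hUB hd]
            exact rho_mono hρadd (hUA.union _ _ hUB)
              hUn (Set.union_subset Set.inter_subset_left Set.inter_subset_left)
end

section
/- Let G be a countable group acting on a standard Borel space X by Borel automorphisms, and suppose there exists a Borel partition {A_n}_{n∈ℕ} of X into countably many pieces each of which meets every orbit (a complete section), together with a countable base-like family {U_n}_{n∈ℕ} generating the Borel σ-algebra of X. Suppose T ⊆ X is a Borel partial transversal (|T ∩ [x]_G| ≤ 1 for every x) and the action on [T]_G is aperiodic (every orbit meeting T is infinite). Then there exist pairwise disjoint Borel sets {T_n}_{n∈ℕ} with T_0 = T such that for each n there is a Borel function γ_n : T → G with x ↦ γ_n(x) • x a bijection from T onto T_n (so T is a Borel traveling set). -/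
/-- Let `G` be a countable group acting on a standard Borel space `X`,
given a Borel partition `{A n}` of `X` into complete sections and a countable family
`{U n}` generating the Borel σ-algebra of `X`. If `T ⊆ X` is a Borel partial
transversal and the action is aperiodic on `[T]_G` (every orbit meeting `T` is
infinite), then `T` is a Borel traveling set: there are pairwise disjoint Borel sets
`{T n}` with `T 0 = T` and, for each `n`, a Borel map `γ : T → G` such that
`x ↦ γ(x) • x` is a bijection from `T` onto `T n`. -/
theorem stmt_14 {G X : Type*} [Group G] [Countable G]
    [MeasurableSpace X] [StandardBorelSpace X] [MulAction G X]
    (hact : ∀ g : G, Measurable fun x : X => g • x)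
    (A : ℕ → Set X) (hAm : ∀ n, MeasurableSet (A n))
    (hAd : Pairwise (Function.onFun Disjoint A)) (hAU : (⋃ n, A n) = Set.univ)
    (hAcs : ∀ (n : ℕ) (x : X), ∃ g : G, g • x ∈ A n)
    (U : ℕ → Set X)
    (hUgen : MeasurableSpace.generateFrom (Set.range U) =
      (inferInstance : MeasurableSpace X))
    (T : Set X) (hTm : MeasurableSet T)
    (hTpt : ∀ x ∈ T, ∀ y ∈ T, (∃ g : G, g • x = y) → x = y)
    (hap : ∀ x ∈ T, (MulAction.orbit G x).Infinite) :
    ∃ Tn : ℕ → Set X, (∀ n, MeasurableSet (Tn n)) ∧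
      Pairwise (Function.onFun Disjoint Tn) ∧ Tn 0 = T ∧
      ∀ n, ∃ γ : X → G, (∀ g : G, MeasurableSet {x ∈ T | γ x = g}) ∧
        Set.BijOn (fun x => γ x • x) T (Tn n) := by
  classical
  obtain ⟨e, he⟩ := exists_surjective_nat G
  set g : ℕ → G := fun n => if n = 0 then 1 else e (n - 1) with hgdef
  have hg0 : g 0 = 1 := by simp [hgdef]
  have hgsurj : ∀ h : G, ∃ k, g k = h := by
    intro h
    obtain ⟨k, hk⟩ := he h
    exact ⟨k + 1, by simp [hgdef, hk]⟩
  set new : X → ℕ → Prop := fun x k => ∀ j < k, g j • x ≠ g k • x with hnewdef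
  have hnew0 : ∀ x, new x 0 := fun x j hj => absurd hj (Nat.not_lt_zero j)
  letI := upgradeStandardBorel X
  have heqm : ∀ a b : G, MeasurableSet {x : X | a • x = b • x} := by
    intro a b
    have : {x : X | a • x = b • x}
        = (fun x : X => (a • x, b • x)) ⁻¹' Set.diagonal X := by
      ext x; simp [Set.diagonal, eq_comm]
    rw [this]
    exact ((hact a).prodMk (hact b)) isClosed_diagonal.measurableSet
  have hnewm : ∀ k, MeasurableSet {x : X | new x k} := by
    intro k
    have : {x : X | new x k} = ⋂ j ∈ Set.Iio k, {x : X | g j • x = g k • x}ᶜ := by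
      ext x; simp [hnewdef]
    rw [this]
    exact MeasurableSet.biInter (Set.to_countable _) fun j _ => (heqm _ _).compl
  set γf : ℕ → X → G := fun n x => g (Nat.nth (new x) n) with hγdef
  have hinf : ∀ x ∈ T, (setOf (new x)).Infinite := by
    intro x hx hfin
    apply hap x hx
    have horb : MulAction.orbit G x ⊆ (fun k => g k • x) '' setOf (new x) := by
      rintro y ⟨h, rfl⟩
      obtain ⟨k, hk⟩ := hgsurj h
      have hex : ∃ j, g j • x = g k • x := ⟨k, rfl⟩
      refine ⟨Nat.find hex, ?_, ?_⟩
      · intro j hj hje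
        exact Nat.find_min hex hj (hje.trans (Nat.find_spec hex))
      · show g (Nat.find hex) • x = h • x
        rw [Nat.find_spec hex, hk]
    exact (hfin.image _).subset horb
  have hcm : ∀ k, Measurable fun x : X => Nat.count (new x) k := by
    intro k
    induction k with
    | zero => simp only [Nat.count_zero]; exact measurable_const
    | succ k ih =>
      have h1 : (fun x : X => Nat.count (new x) (k + 1))
          = fun x => Nat.count (new x) k + if new x k then 1 else 0 := by
        funext x; rw [Nat.count_succ]
      rw [h1]
      exact ih.add (Measurable.ite (hnewm k) measurable_const measurable_const)
  have hγm : ∀ (n : ℕ) (h : G), MeasurableSet {x ∈ T | γf n x = h} := by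
    intro n h
    have hrep : {x ∈ T | γf n x = h}
        = ⋃ k ∈ {k : ℕ | g k = h},
            T ∩ ({x : X | new x k} ∩ {x : X | Nat.count (new x) k = n}) := by
      ext x
      simp only [Set.mem_setOf_eq, Set.mem_iUnion, Set.mem_inter_iff, exists_prop]
      constructor
      · rintro ⟨hxT, hγ⟩
        refine ⟨Nat.nth (new x) n, hγ, hxT,
          Nat.nth_mem_of_infinite (hinf x hxT) n,
          Nat.count_nth (fun hf => absurd hf (hinf x hxT))⟩
      · rintro ⟨k, hk, hxT, hnk, hcnt⟩
        refine ⟨hxT, ?_⟩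
        have hidx : Nat.nth (new x) n = k := by
          rw [← hcnt]; exact Nat.nth_count hnk
        simp only [hγdef, hidx, hk]
    rw [hrep]
    refine MeasurableSet.biUnion (Set.to_countable _) fun k _ => ?_
    exact hTm.inter ((hnewm k).inter ((hcm k) (measurableSet_singleton n)))
  have hdist : ∀ x ∈ T, ∀ {m n : ℕ}, m ≠ n → γf m x • x ≠ γf n x • x := by
    intro x hx m n hmn
    wlog hlt : m < n generalizing m n
    · exact fun hcontr =>
        this hmn.symm (hmn.lt_or_gt.resolve_left hlt) hcontr.symm
    have h1 : Nat.nth (new x) m < Nat.nth (new x) n :=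
      Nat.nth_strictMono (hinf x hx) hlt
    have h2 : new x (Nat.nth (new x) n) := Nat.nth_mem_of_infinite (hinf x hx) n
    simp only [hγdef]
    exact h2 _ h1
  have hγ0 : ∀ x : X, γf 0 x = 1 := by
    intro x
    have h0 : Nat.nth (new x) 0 = 0 := by
      rw [Nat.nth_zero]
      exact Nat.sInf_eq_zero.mpr (Or.inl (hnew0 x))
    simp only [hγdef, h0, hg0]
  refine ⟨fun n => (fun x => γf n x • x) '' T, ?_, ?_, ?_, ?_⟩
  · intro n
    have himg : (fun x => γf n x • x) '' T
        = ⋃ h : G, (fun x : X => h⁻¹ • x) ⁻¹' {x ∈ T | γf n x = h} := by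
      ext y
      simp only [Set.mem_image, Set.mem_iUnion, Set.mem_preimage, Set.mem_setOf_eq]
      constructor
      · rintro ⟨x, hx, rfl⟩
        refine ⟨γf n x, ?_⟩
        rw [inv_smul_smul]
        exact ⟨hx, rfl⟩
      · rintro ⟨h, hmem, hγ⟩
        exact ⟨h⁻¹ • y, hmem, by rw [hγ, smul_inv_smul]⟩
    show MeasurableSet ((fun x => γf n x • x) '' T)
    rw [himg]
    exact MeasurableSet.iUnion fun h => (hact h⁻¹) (hγm n h)
  · intro m n hmn
    rw [Function.onFun, Set.disjoint_left]
    rintro y ⟨x, hx, rfl⟩ ⟨x', hx', hee0⟩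
    have hee : γf n x' • x' = γf m x • x := hee0
    have hxx : x' = x :=
      hTpt x' hx' x hx ⟨(γf m x)⁻¹ * γf n x', by rw [mul_smul, hee, inv_smul_smul]⟩
    rw [hxx] at hee
    exact hdist x hx hmn.symm hee
  · ext y
    simp only [Set.mem_image]
    constructor
    · rintro ⟨x, hx, rfl⟩
      rw [hγ0 x, one_smul]
      exact hx
    · intro hy
      exact ⟨y, hy, by rw [hγ0 y, one_smul]⟩
  · intro n
    refine ⟨γf n, hγm n, fun x hx => Set.mem_image_of_mem _ hx, ?_, Set.surjOn_image _ _⟩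
    intro x hx y hy hxy0
    have hxy : γf n x • x = γf n y • y := hxy0
    exact hTpt x hx y hy
      ⟨(γf n y)⁻¹ * γf n x, by rw [mul_smul, hxy, inv_smul_smul]⟩
end

section
/- Let G be a countable group acting freely and smoothly by Borel automorphisms on a standard Borel space X with all orbits infinite. Then X admits a Borel 2-generator: there is a Borel set A ⊆ X such that the family {g • A : g ∈ G} ∪ {g • (X \ A) : g ∈ G} separates points of X (equivalently, the symbolic representation map X → 2^G with respect to the partition {A, X \ A} is injective). -/
/-- Pick an element avoiding all products `f i * (f i')⁻¹ * f j'` with indices `< n`. -/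
noncomputable def sidonPick {G : Type*} [Group G] [Infinite G] (f : ℕ → G) (n : ℕ) : G :=
  (Set.Finite.image (fun p : ℕ × ℕ × ℕ => f p.1 * (f p.2.1)⁻¹ * f p.2.2)
    ((Set.finite_Iio n).prod ((Set.finite_Iio n).prod
      (Set.finite_Iio n)))).infinite_compl.nonempty.choose

lemma sidonPick_spec {G : Type*} [Group G] [Infinite G] (f : ℕ → G) (n : ℕ) :
    sidonPick f n ∉ (fun p : ℕ × ℕ × ℕ => f p.1 * (f p.2.1)⁻¹ * f p.2.2) ''
      (Set.Iio n ×ˢ (Set.Iio n ×ˢ Set.Iio n)) :=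
  (Set.Finite.image (fun p : ℕ × ℕ × ℕ => f p.1 * (f p.2.1)⁻¹ * f p.2.2)
    ((Set.finite_Iio n).prod ((Set.finite_Iio n).prod
      (Set.finite_Iio n)))).infinite_compl.nonempty.choose_spec

noncomputable def sidonSeq (G : Type*) [Group G] [Infinite G] : ℕ → G
  | n => sidonPick (fun m => if h : m < n then sidonSeq G m else 1) n
  termination_by n => n

lemma sidonSeq_not_mem (G : Type*) [Group G] [Infinite G] (n : ℕ) :
    sidonSeq G n ∉ (fun p : ℕ × ℕ × ℕ =>
      sidonSeq G p.1 * (sidonSeq G p.2.1)⁻¹ * sidonSeq G p.2.2) ''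
      (Set.Iio n ×ˢ (Set.Iio n ×ˢ Set.Iio n)) := by
  intro h
  obtain ⟨⟨i, i', j'⟩, hp, hval⟩ := h
  obtain ⟨hi, hi', hj'⟩ : i < n ∧ i' < n ∧ j' < n := by
    simpa [Set.mem_prod] using hp
  apply sidonPick_spec (fun m => if h : m < n then sidonSeq G m else 1) n
  refine ⟨(i, i', j'), by simp [Set.mem_prod, hi, hi', hj'], ?_⟩
  simp only [hi, hi', hj', dif_pos]
  simp only at hval
  rw [hval, sidonSeq]

lemma sidonSeq_spec (G : Type*) [Group G] [Infinite G] :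
    ∀ i j i' j' : ℕ, i' ≠ j' → max i j < max i' j' →
      (sidonSeq G i)⁻¹ * sidonSeq G j ≠ (sidonSeq G i')⁻¹ * sidonSeq G j' := by
  intro i j i' j' hne hlt heq
  set a := sidonSeq G with ha
  rcases Nat.lt_or_ge i' j' with h | h
  · -- max i' j' = j'
    have hij : i < j' ∧ j < j' := by
      constructor <;> [exact lt_of_le_of_lt (le_max_left i j) (by omega);
        exact lt_of_le_of_lt (le_max_right i j) (by omega)]
    apply sidonSeq_not_mem G j'
    refine ⟨(i', i, j), by simp [Set.mem_prod, h, hij.1, hij.2], ?_⟩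
    show a i' * (a i)⁻¹ * a j = a j'
    have : a i' * ((a i')⁻¹ * a j') = a j' := by group
    rw [← heq] at this
    rw [← this]; group
  · -- i' > j', max i' j' = i'
    have hj'i' : j' < i' := by omega
    have hij : i < i' ∧ j < i' := by
      constructor <;> [exact lt_of_le_of_lt (le_max_left i j) (by omega);
        exact lt_of_le_of_lt (le_max_right i j) (by omega)]
    apply sidonSeq_not_mem G i'
    refine ⟨(j', j, i), by simp [Set.mem_prod, hj'i', hij.1, hij.2], ?_⟩
    show a j' * (a j)⁻¹ * a i = a i'
    have h1 : a j' = a i' * ((a i)⁻¹ * a j) := by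
      have : a i' * ((a i')⁻¹ * a j') = a j' := by group
      rw [← heq] at this; exact this.symm
    rw [h1]; group

lemma sidonSeq_injective (G : Type*) [Group G] [Infinite G] :
    Function.Injective (sidonSeq G) := by
  intro i j h
  by_contra hne
  rcases Nat.lt_or_ge i j with hlt | hge
  · exact sidonSeq_spec G i i i j hne (by rw [max_self]; exact lt_of_lt_of_le hlt (le_max_right i j)) (by rw [h])
  · have hlt : j < i := by omega
    exact sidonSeq_spec G j j j i (Ne.symm hne) (by rw [max_self]; exact lt_of_lt_of_le hlt (le_max_right j i)) (by rw [h])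

/-- Encoding of a set of naturals as a subset of the group, using the Sidon sequence. -/
def phiSet {G : Type*} (a : ℕ → G) (s : Set ℕ) : Set G :=
  {u | (∃ n, u = a (3 * n)) ∨ ∃ n, u = a (3 * n + 1) ∧ n ∈ s}

lemma phiSet_marker {G : Type*} (a : ℕ → G) (s : Set ℕ) (n : ℕ) :
    a (3 * n) ∈ phiSet a s := Or.inl ⟨n, rfl⟩

lemma phiSet_sub_range {G : Type*} (a : ℕ → G) (s : Set ℕ) {u : G}
    (h : u ∈ phiSet a s) : ∃ m, u = a m := by
  rcases h with ⟨n, h⟩ | ⟨n, h, -⟩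
  · exact ⟨3 * n, h⟩
  · exact ⟨3 * n + 1, h⟩

lemma phiSet_code {G : Type*} {a : ℕ → G} (ha : Function.Injective a) (s : Set ℕ) (n : ℕ) :
    a (3 * n + 1) ∈ phiSet a s ↔ n ∈ s := by
  constructor
  · rintro (⟨m, hm⟩ | ⟨m, hm, hms⟩)
    · exact absurd (ha hm) (by omega)
    · have hnm : n = m := by have := ha hm; omega
      exact hnm ▸ hms
  · intro h; exact Or.inr ⟨n, rfl, h⟩

lemma phi_rigid {G : Type*} [Group G] [Infinite G] (s s' : Set ℕ) (k : G)
    (H : ∀ u, u ∈ phiSet (sidonSeq G) s ↔ u * k ∈ phiSet (sidonSeq G) s') :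
    k = 1 ∧ s = s' := by
  set a := sidonSeq G with ha
  have hk : k = 1 := by
    by_contra hk1
    have hm : ∀ n : ℕ, ∃ m, a (3 * n) * k = a m := fun n =>
      phiSet_sub_range a s' ((H (a (3 * n))).mp (phiSet_marker a s n))
    choose m hm using hm
    have hkval : ∀ n, (a (3 * n))⁻¹ * a (m n) = k := fun n => by
      rw [← hm n]; group
    have hne : ∀ n, 3 * n ≠ m n := by
      intro n h
      apply hk1
      have := hm n
      rw [← h] at this
      exact (mul_eq_left).mp this
    have hmax : ∀ n, max (3 * n) (m n) ≤ max (3 * 0) (m 0) := by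
      intro n
      by_contra hlt
      exact sidonSeq_spec G (3 * 0) (m 0) (3 * n) (m n) (hne n) (by omega)
        (by rw [hkval, hkval])
    have h1 := hmax (max (3 * 0) (m 0) + 1)
    have h2 : 3 * (max (3 * 0) (m 0) + 1) ≤ max (3 * (max (3 * 0) (m 0) + 1))
        (m (max (3 * 0) (m 0) + 1)) := le_max_left _ _
    omega
  refine ⟨hk, ?_⟩
  have H' : ∀ u, u ∈ phiSet a s ↔ u ∈ phiSet a s' := by
    intro u; rw [H u, hk, mul_one]
  ext n
  rw [← phiSet_code (sidonSeq_injective G) s n, ← phiSet_code (sidonSeq_injective G) s' n]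
  exact H' _


/-- If a countable group `G` acts freely and smoothly (there is a
Borel transversal meeting every orbit in exactly one point) by Borel automorphisms on a
standard Borel space `X` with all orbits infinite, then `X` admits a Borel
`2`-generator: a Borel set `A` such that the symbolic representation map with respect to
`{A, X \ A}` is injective, i.e. the translates of `A` and `X \ A` separate points. -/
theorem stmt_15 {G X : Type*} [Group G] [Countable G]
    [MeasurableSpace X] [StandardBorelSpace X] [MulAction G X]
    (hact : ∀ g : G, Measurable fun x : X => g • x)
    (hfree : ∀ (g : G) (x : X), g • x = x → g = 1)
    (hsmooth : ∃ T : Set X, MeasurableSet T ∧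
      ∀ x : X, ∃! y, y ∈ T ∧ y ∈ MulAction.orbit G x)
    (hap : ∀ x : X, (MulAction.orbit G x).Infinite) :
    ∃ A : Set X, MeasurableSet A ∧
      ∀ x y : X, (∀ g : G, g • x ∈ A ↔ g • y ∈ A) → x = y := by
  classical
  rcases isEmpty_or_nonempty X with hX | hX
  · exact ⟨∅, MeasurableSet.empty, fun x y _ => (IsEmpty.false x).elim⟩
  obtain ⟨T, hT, huniq⟩ := hsmooth
  -- G is infinite
  haveI hGinf : Infinite G := by
    obtain ⟨x⟩ := hX
    rcases finite_or_infinite G with h | h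
    · exact absurd (Set.finite_range fun g : G => g • x) (hap x)
    · exact h
  -- the cocycle c : X → G with c x • x ∈ T
  have hex : ∀ x : X, ∃ g : G, g • x ∈ T := by
    intro x
    obtain ⟨y, ⟨hyT, hyo⟩, -⟩ := huniq x
    obtain ⟨g, hg⟩ := MulAction.mem_orbit_iff.mp hyo
    exact ⟨g, hg ▸ hyT⟩
  choose c hc using hex
  have hcu : ∀ (x : X) (g : G), g • x ∈ T → g = c x := by
    intro x g hg
    obtain ⟨y, -, hy2⟩ := huniq x
    have h1 : g • x = y := hy2 (g • x) ⟨hg, MulAction.mem_orbit x g⟩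
    have h2 : c x • x = y := hy2 (c x • x) ⟨hc x, MulAction.mem_orbit x (c x)⟩
    have h3 : ((c x)⁻¹ * g) • x = x := by
      rw [mul_smul, h1, ← h2, inv_smul_smul]
    have h4 := hfree _ _ h3
    have : c x * ((c x)⁻¹ * g) = c x * 1 := by rw [h4]
    simpa [mul_assoc] using this
  have hcg : ∀ (x : X) (g : G), c (g • x) = c x * g⁻¹ := by
    intro x g
    refine (hcu (g • x) (c x * g⁻¹) ?_).symm
    rw [mul_smul, inv_smul_smul]
    exact hc x
  -- embedding into ℝ and the separating family
  obtain ⟨f, hf⟩ := MeasureTheory.exists_measurableEmbedding_real X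
  obtain ⟨e⟩ : Nonempty (ℕ ≃ ℚ) := ⟨(Denumerable.eqv ℚ).symm⟩
  set a : ℕ → G := sidonSeq G with haa
  set β : X → Set ℕ := fun z => {n | f z < (e n : ℝ)} with hβ
  set A : Set X := {z | (c z)⁻¹ ∈ phiSet a (β (c z • z))} with hA
  have hβinj : ∀ z w : X, β z = β w → z = w := by
    intro z w hzw
    apply hf.injective
    by_contra hne
    rcases lt_or_gt_of_ne hne with hlt | hlt
    · obtain ⟨q, hq1, hq2⟩ := exists_rat_btwn hlt
      have h1 : e.symm q ∈ β z := by simpa [hβ] using hq1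
      rw [hzw] at h1
      have : f w < (q : ℝ) := by simpa [hβ] using h1
      exact absurd this (not_lt.mpr hq2.le)
    · obtain ⟨q, hq1, hq2⟩ := exists_rat_btwn hlt
      have h1 : e.symm q ∈ β w := by simpa [hβ] using hq1
      rw [← hzw] at h1
      have : f z < (q : ℝ) := by simpa [hβ] using h1
      exact absurd this (not_lt.mpr hq2.le)
  refine ⟨A, ?_, ?_⟩
  · -- measurability
    have hAeq : A = ⋃ g : G, ({x | g • x ∈ T} ∩
        ({_x : X | ∃ n, g⁻¹ = a (3 * n)} ∪
          ⋃ n : ℕ, ({_x : X | g⁻¹ = a (3 * n + 1)} ∩ {x | f (g • x) < (e n : ℝ)}))) := by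
      ext x
      simp only [Set.mem_iUnion, Set.mem_inter_iff, Set.mem_union, Set.mem_setOf_eq]
      constructor
      · intro hx
        refine ⟨c x, hc x, ?_⟩
        rcases hx with ⟨n, hn⟩ | ⟨n, hn, hns⟩
        · exact Or.inl ⟨n, hn⟩
        · exact Or.inr ⟨n, hn, by simpa [hβ] using hns⟩
      · rintro ⟨g, hgT, hcode⟩
        have hgc : g = c x := hcu x g hgT
        subst hgc
        rcases hcode with ⟨n, hn⟩ | ⟨n, hn, hns⟩
        · exact Or.inl ⟨n, hn⟩
        · exact Or.inr ⟨n, hn, by simpa [hβ] using hns⟩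
    rw [hAeq]
    refine MeasurableSet.iUnion fun g => ((hact g) hT).inter ?_
    refine (MeasurableSet.const _).union (MeasurableSet.iUnion fun n =>
      (MeasurableSet.const _).inter ?_)
    exact (hf.measurable.comp (hact g)) measurableSet_Iio
  · -- injectivity
    intro x y h
    have hmem : ∀ (z : X) (g : G), g • z ∈ A ↔ g * (c z)⁻¹ ∈ phiSet a (β (c z • z)) := by
      intro z g
      have h1 : c (g • z) • (g • z) = c z • z := by
        rw [hcg z g, mul_smul, inv_smul_smul]
      have h2 : (c (g • z))⁻¹ = g * (c z)⁻¹ := by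
        rw [hcg z g, mul_inv_rev, inv_inv]
      show (c (g • z))⁻¹ ∈ phiSet a (β (c (g • z) • (g • z))) ↔ _
      rw [h1, h2]
    have H : ∀ u : G, u ∈ phiSet a (β (c x • x)) ↔
        u * (c x * (c y)⁻¹) ∈ phiSet a (β (c y • y)) := by
      intro u
      have := (hmem x (u * c x)).symm.trans ((h (u * c x)).trans (hmem y (u * c x)))
      simpa [mul_assoc] using this
    obtain ⟨hk, hs⟩ := phi_rigid (β (c x • x)) (β (c y • y)) (c x * (c y)⁻¹) H
    have hcxy : c x = c y := by
      rwa [mul_inv_eq_one] at hk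
    have htxy : c x • x = c y • y := hβinj _ _ hs
    calc x = (c x)⁻¹ • (c x • x) := (inv_smul_smul _ _).symm
      _ = (c y)⁻¹ • (c y • y) := by rw [htxy, hcxy]
      _ = y := inv_smul_smul _ _
end

section
/- Let T be a homeomorphism of a Polish space X such that for every nonempty open V ⊆ X there is d ≥ 1 with {T^{nd}(V)}_{n∈ℕ} having the finite intersection property (all finite sub-intersections nonempty). Then for every nonempty open V and every N ∈ ℕ, the set F = {kd : k ≤ N} is a d-syndetic subset of ℤ of length Nd with ⋂_{n∈F} T^n(V) ≠ ∅; consequently every nonempty open set contains arbitrarily long d-syndetic sets for some d, and X has no non-meager Baire measurable weakly wandering subset. -/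
/-- Let `T` be a homeomorphism of a Polish space `X` such that for
every nonempty open `V` there is `d ≥ 1` with `{T^(n·d)(V)}_{n ∈ ℕ}` having the finite
intersection property. Then for every nonempty open `V` there is `d ≥ 1` such that for
every `N` the set `F = {k·d : k ≤ N}` is a `d`-syndetic subset of `ℤ` of length `N·d`
with `⋂_{n ∈ F} T^n(V) ≠ ∅`; consequently every nonempty open set contains arbitrarily
long `d`-syndetic sets for some `d ≥ 1`, and `X` has no non-meager Baire measurable
weakly wandering subset. -/
theorem stmt_18 {X : Type*} [TopologicalSpace X] [PolishSpace X]
    (T : Equiv.Perm X) (hT : Continuous T) (hT' : Continuous T.symm)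
    (hyp : ∀ V : Set X, IsOpen V → V.Nonempty → ∃ d : ℕ, 1 ≤ d ∧
      ∀ t : Finset ℕ, (⋂ n ∈ t, (T ^ ((n * d : ℕ) : ℤ)) '' V).Nonempty) :
    (∀ V : Set X, IsOpen V → V.Nonempty → ∃ d : ℕ, 1 ≤ d ∧ ∀ N : ℕ,
      IsSyndetic d ((Finset.range (N + 1)).image fun k => ((k * d : ℕ) : ℤ)) ∧
      synLen ((Finset.range (N + 1)).image fun k => ((k * d : ℕ) : ℤ)) = (N * d : ℕ) ∧
      (⋂ n ∈ (Finset.range (N + 1)).image fun k => ((k * d : ℕ) : ℤ),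
        (T ^ n) '' V).Nonempty) ∧
    (∀ V : Set X, IsOpen V → V.Nonempty → ∃ d : ℕ, 1 ≤ d ∧
      ∀ l : ℕ, ∃ F : Finset ℤ, IsSyndetic d F ∧ (l : ℤ) ≤ synLen F ∧
        (⋂ n ∈ F, (T ^ n) '' V).Nonempty) ∧
    ¬ ∃ A : Set X, BaireMeasurableSet A ∧ ¬ IsMeagre A ∧
      ∃ H : Set ℤ, H.Infinite ∧
        H.Pairwise fun h h' => Disjoint ((T ^ h) '' A) ((T ^ h') '' A) := by
  -- basic dynamical facts
  have hcont : ∀ n : ℤ, Continuous ⇑(T ^ n) := by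
    intro n
    induction n using Int.induction_on with
    | zero => simpa using continuous_id
    | succ k ih =>
        rw [zpow_add_one, Equiv.Perm.coe_mul]
        exact ih.comp hT
    | pred k ih =>
        rw [zpow_sub_one, Equiv.Perm.coe_mul, Equiv.Perm.inv_def]
        exact ih.comp hT'
  have hsymm : ∀ n : ℤ, ((T ^ n).symm : X → X) = ⇑(T ^ (-n)) := by
    intro n; rw [zpow_neg, Equiv.Perm.inv_def]
  have hopen : ∀ (n : ℤ) (U : Set X), IsOpen U → IsOpen ((T ^ n) '' U) := by
    intro n U hU
    rw [Equiv.image_eq_preimage_symm, hsymm]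
    exact hU.preimage (hcont _)
  have hmeagre : ∀ (n : ℤ) {s : Set X}, IsMeagre s → IsMeagre ((T ^ n) '' s) := by
    intro n s hs
    rw [Equiv.image_eq_preimage_symm, hsymm]
    exact hs.preimage_of_isOpenMap (hcont _) (fun U hU => hopen _ U hU)
  have himg : ∀ (n m : ℤ) (s : Set X), (T ^ (n + m)) '' s = (T ^ n) '' ((T ^ m) '' s) := by
    intro n m s
    rw [zpow_add, Equiv.Perm.coe_mul, Set.image_comp]
  -- Part 1
  have part1 : ∀ V : Set X, IsOpen V → V.Nonempty → ∃ d : ℕ, 1 ≤ d ∧ ∀ N : ℕ,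
      IsSyndetic d ((Finset.range (N + 1)).image fun k => ((k * d : ℕ) : ℤ)) ∧
      synLen ((Finset.range (N + 1)).image fun k => ((k * d : ℕ) : ℤ)) = (N * d : ℕ) ∧
      (⋂ n ∈ (Finset.range (N + 1)).image fun k => ((k * d : ℕ) : ℤ),
        (T ^ n) '' V).Nonempty := by
    intro V hV hVne
    obtain ⟨d, hd, hFIP⟩ := hyp V hV hVne
    refine ⟨d, hd, fun N => ?_⟩
    set F : Finset ℤ := (Finset.range (N + 1)).image fun k => ((k * d : ℕ) : ℤ) with hF
    have h0 : (0 : ℤ) ∈ F := by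
      rw [hF, Finset.mem_image]
      exact ⟨0, by simp⟩
    have hne : F.Nonempty := ⟨0, h0⟩
    have hsynd : IsSyndetic d F := by
      refine ⟨hne, ?_⟩
      intro m hm m' hm' hlt
      rw [hF, Finset.mem_image] at hm hm'
      obtain ⟨a, ha, rfl⟩ := hm
      obtain ⟨b, hb, rfl⟩ := hm'
      rw [Finset.mem_range] at ha hb
      have hab : a < b := by
        by_contra hc
        push_neg at hc
        have : b * d ≤ a * d := Nat.mul_le_mul_right d hc
        exact absurd hlt (by exact_mod_cast Nat.not_lt.mpr this)
      refine ⟨(((a + 1) * d : ℕ) : ℤ), ?_, ?_, ?_⟩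
      · rw [hF, Finset.mem_image]
        exact ⟨a + 1, Finset.mem_range.mpr (by omega), rfl⟩
      · exact_mod_cast (Nat.mul_lt_mul_right (by omega : 0 < d)).mpr (by omega)
      · exact_mod_cast le_of_eq (by ring : (a + 1) * d = a * d + d)
    have hmax : F.max' hne = ((N * d : ℕ) : ℤ) := by
      apply le_antisymm
      · apply Finset.max'_le
        intro y hy
        rw [hF, Finset.mem_image] at hy
        obtain ⟨b, hb, rfl⟩ := hy
        rw [Finset.mem_range] at hb
        exact_mod_cast Nat.mul_le_mul_right d (by omega)
      · apply Finset.le_max'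
        rw [hF, Finset.mem_image]
        exact ⟨N, Finset.mem_range.mpr (by omega), rfl⟩
    have hmin : F.min' hne = 0 := by
      apply le_antisymm
      · exact Finset.min'_le _ _ h0
      · apply Finset.le_min'
        intro y hy
        rw [hF, Finset.mem_image] at hy
        obtain ⟨b, hb, rfl⟩ := hy
        positivity
    refine ⟨hsynd, ?_, ?_⟩
    · rw [synLen, dif_pos hne, hmax, hmin, sub_zero]
    · rw [hF, Finset.set_biInter_finset_image]
      exact hFIP (Finset.range (N + 1))
  refine ⟨part1, ?_, ?_⟩
  · -- Part 2
    intro V hV hVne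
    obtain ⟨d, hd, hP⟩ := part1 V hV hVne
    refine ⟨d, hd, fun l => ?_⟩
    obtain ⟨hs, hlen, hint⟩ := hP l
    refine ⟨_, hs, ?_, hint⟩
    rw [hlen]
    exact_mod_cast Nat.le_mul_of_pos_right l (by omega)
  · -- Part 3
    rintro ⟨A, hBM, hnm, H, hHinf, hpair⟩
    obtain ⟨U, hUopen, hAU⟩ := hBM.residualEq_isOpen
    have hm1 : IsMeagre (A \ U) := by
      rw [IsMeagre]
      filter_upwards [hAU] with x hx
      intro ⟨ha, hu⟩
      exact hu ((iff_of_eq hx).mp ha)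
    have hm2 : IsMeagre (U \ A) := by
      rw [IsMeagre]
      filter_upwards [hAU] with x hx
      intro ⟨hu, ha⟩
      exact ha ((iff_of_eq hx).mpr hu)
    have hUne : U.Nonempty := by
      rcases Set.eq_empty_or_nonempty U with h | h
      · exact absurd (hm1.mono (s := A \ U) (t := A) (fun x hx => ⟨hx, by simp [h]⟩)) hnm
      · exact h
    obtain ⟨d, hd, hFIP⟩ := hyp U hUopen hUne
    letI := TopologicalSpace.upgradeIsCompletelyMetrizable X
    -- a key claim
    have claim : ∀ a b : ℤ, a ∈ H → b ∈ H → a < b → (d : ℤ) ∣ b - a → False := by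
      intro a b ha hb hab hdvd
      obtain ⟨k, hk⟩ := hdvd
      have hkpos : 0 < k := by
        by_contra hc
        push_neg at hc
        have h1 : (d : ℤ) * k ≤ 0 :=
          mul_nonpos_of_nonneg_of_nonpos (by positivity) hc
        omega
      lift k to ℕ using hkpos.le with k'
      have hm : b - a = ((k' * d : ℕ) : ℤ) := by push_cast; rw [hk]; ring
      set m : ℤ := ((k' * d : ℕ) : ℤ) with hmdef
      have hWopen : IsOpen (U ∩ (T ^ m) '' U) := hUopen.inter (hopen _ _ hUopen)
      have hWne : (U ∩ (T ^ m) '' U).Nonempty := by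
        obtain ⟨z, hz⟩ := hFIP {0, k'}
        simp only [Set.mem_iInter, Finset.mem_insert, Finset.mem_singleton] at hz
        have h0 := hz 0 (Or.inl rfl)
        have hk2 := hz k' (Or.inr rfl)
        simp only [Nat.zero_mul, Nat.cast_zero, zpow_zero, Equiv.Perm.coe_one,
          Set.image_id] at h0
        exact ⟨z, h0, hk2⟩
      have hAm : (A ∩ (T ^ m) '' A).Nonempty := by
        by_contra hc
        rw [Set.not_nonempty_iff_eq_empty] at hc
        have hsub : U ∩ (T ^ m) '' U ⊆ (U \ A) ∪ (T ^ m) '' (U \ A) := by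
          rintro z ⟨hzU, w, hwU, rfl⟩
          by_cases hzA : (T ^ m) w ∈ A
          · by_cases hwA : w ∈ A
            · exfalso
              have hmem : (T ^ m) w ∈ A ∩ (T ^ m) '' A := ⟨hzA, w, hwA, rfl⟩
              rw [hc] at hmem
              exact hmem
            · exact Or.inr ⟨w, ⟨hwU, hwA⟩, rfl⟩
          · exact Or.inl ⟨hzU, hzA⟩
        have hmgr : IsMeagre (U ∩ (T ^ m) '' U) := by
          refine IsMeagre.mono hsub ?_
          rw [IsMeagre, Set.compl_union]
          exact Filter.inter_mem hm2 (hmeagre m hm2)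
        have hdense : Dense ((U ∩ (T ^ m) '' U)ᶜ) := dense_of_mem_residual hmgr
        obtain ⟨z, hz1, hz2⟩ := hdense.inter_open_nonempty _ hWopen hWne
        exact hz2 hz1
      have hdisj := hpair ha hb (ne_of_lt hab)
      obtain ⟨z, hzA, hzm⟩ := hAm
      have h1 : (T ^ a) z ∈ (T ^ a) '' A := ⟨z, hzA, rfl⟩
      have h2 : (T ^ a) z ∈ (T ^ b) '' A := by
        have hb' : b = a + m := by omega
        rw [hb', himg]
        exact ⟨z, hzm, rfl⟩
      exact (Set.disjoint_left.mp hdisj h1) h2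
    -- pigeonhole
    haveI : NeZero d := ⟨by omega⟩
    obtain ⟨x, hx, y, hy, hxy, hfeq⟩ := hHinf.exists_ne_map_eq_of_mapsTo
      (f := fun n : ℤ => (n : ZMod d)) (Set.mapsTo_univ _ _) Set.finite_univ
    have hdvd : (d : ℤ) ∣ y - x := ((ZMod.intCast_eq_intCast_iff x y d).mp hfeq).dvd
    rcases lt_or_gt_of_ne hxy with h | h
    · exact claim x y hx hy h hdvd
    · exact claim y x hy hx h (dvd_sub_comm.mp hdvd)
end
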